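/- Let Υ be a C³ real-valued function on a neighborhood of 0 in ℝ, and define f(r) = e^{Υ(r)}·r. Then f is a local diffeomorphism at 0 with f(0) = 0; let g be its local inverse. The function b defined by b(s) = g(s)/s for s ≠ 0 and b(0) = e^{−Υ(0)} is C² on a neighborhood of 0 and satisfies b'(0) = −Υ'(0)·e^{−2Υ(0)} and b''(0) = (3·Υ'(0)² − Υ''(0))·e^{−3Υ(0)}. -/

import Mathlib

open Filter Real Set
open scoped Topology


/-- inverting `f(r) = e^{Υ(r)} r` locally as `r = s·b(s)` (i.e. `b(s) = g(s)/s`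
for the local inverse `g`, with `b(0) = e^{−Υ(0)}`) yields a C² function `b` near 0 with
`b'(0) = −Υ'(0)e^{−2Υ(0)}` and `b''(0) = (3Υ'(0)² − Υ''(0))e^{−3Υ(0)}`. -/
theorem stmt7 (Υ : ℝ → ℝ) (U : Set ℝ) (hUo : IsOpen U) (hU0 : (0 : ℝ) ∈ U)
    (hΥ : ContDiffOn ℝ 3 Υ U)
    (f : ℝ → ℝ) (hf : f = fun r => Real.exp (Υ r) * r) :
    f 0 = 0 ∧
    ∃ g : ℝ → ℝ, ∃ V : Set ℝ, IsOpen V ∧ (0 : ℝ) ∈ V ∧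
      (∀ s ∈ V, f (g s) = s) ∧ (∀ r ∈ V, g (f r) = r) ∧ g 0 = 0 ∧
      ∀ b : ℝ → ℝ, (b = fun s => if s = 0 then Real.exp (-Υ 0) else g s / s) →
        ContDiffOn ℝ 2 b V ∧
        deriv b 0 = -deriv Υ 0 * Real.exp (-2 * Υ 0) ∧
        deriv (deriv b) 0 = (3 * (deriv Υ 0) ^ 2 - deriv (deriv Υ) 0) * Real.exp (-3 * Υ 0) := by
  set c := Real.exp (Υ 0) with hcdef
  have hc : c ≠ 0 := (Real.exp_pos _).ne'
  have hΥ3 : ContDiffAt ℝ 3 Υ 0 := hΥ.contDiffAt (hUo.mem_nhds hU0)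
  have hfc3 : ContDiffAt ℝ 3 f 0 := by
    rw [hf]
    exact (Real.contDiff_exp.contDiffAt.comp 0 hΥ3).mul contDiffAt_id
  set D : ℝ → ℝ := fun r => Real.exp (Υ r) * deriv Υ r * r + Real.exp (Υ r) with hDdef
  have hΥd : ∀ r ∈ U, HasDerivAt Υ (deriv Υ r) r := fun r hr =>
    ((hΥ.contDiffAt (hUo.mem_nhds hr)).differentiableAt (by norm_num)).hasDerivAt
  have hfd : ∀ r ∈ U, HasDerivAt f (D r) r := by
    intro r hr
    rw [hf]
    have := ((hΥd r hr).exp.mul (hasDerivAt_id r))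
    simpa [hDdef, mul_comm, mul_assoc, mul_left_comm, Pi.mul_def] using this
  have hf00 : f 0 = 0 := by rw [hf]; simp
  have hD0 : D 0 = c := by simp [hDdef, hcdef]
  have hf'0 : HasDerivAt f c 0 := by
    have := hfd 0 hU0
    simpa [hDdef] using this
  have hs : HasStrictDerivAt f c 0 := hfc3.hasStrictDerivAt' hf'0 (by norm_num)
  set g : ℝ → ℝ := hs.localInverse f c 0 hc with hgdef
  have hg3 : ContDiffAt ℝ 3 g 0 := by
    have h := hfc3.to_localInverse (f' := ContinuousLinearEquiv.unitsEquivAut ℝ (Units.mk0 c hc))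
      (hf'0.hasFDerivAt_equiv hc) (by norm_num)
    rw [hf00] at h
    exact h
  have hleft : ∀ᶠ r in 𝓝 (0:ℝ), g (f r) = r :=
    (hs.hasStrictFDerivAt_equiv hc).eventually_left_inverse
  have hright : ∀ᶠ s in 𝓝 (0:ℝ), f (g s) = s := by
    have := (hs.hasStrictFDerivAt_equiv hc).eventually_right_inverse
    rwa [hf00] at this
  have hg0 : g 0 = 0 := by
    have := (hs.hasStrictFDerivAt_equiv hc).localInverse_apply_image
    rwa [hf00] at this
  have hg'0 : HasDerivAt g c⁻¹ 0 := by
    have := hs.to_local_left_inverse hc hleft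
    rw [hf00] at this
    exact this.hasDerivAt
  -- C³ on an open neighborhood
  obtain ⟨W₀, hW₀, hgW₀⟩ := hg3.contDiffOn (le_refl 3) (by simp)
  set W : Set ℝ := interior W₀ with hWdef
  have hgW : ContDiffOn ℝ 3 g W := hgW₀.mono interior_subset
  have hWo : IsOpen W := isOpen_interior
  have hWnhds : W ∈ 𝓝 (0:ℝ) := by
    rw [hWdef]
    exact (mem_interior_iff_mem_nhds.mpr hW₀) |> fun h => hWo.mem_nhds h
  -- auxiliary continuity facts
  have hgc : ContinuousAt g 0 := hg3.continuousAt
  have hdΥ : ContDiffOn ℝ 2 (deriv Υ) U := hΥ.deriv_of_isOpen hUo (by norm_num)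
  have hDcontU : ContinuousOn D U := by
    apply ContinuousOn.add
    · exact ((hΥ.continuousOn.rexp.mul hdΥ.continuousOn).mul continuousOn_id)
    · exact hΥ.continuousOn.rexp
  have hDg_cont : ContinuousAt (fun s => D (g s)) 0 := by
    have h1 : ContinuousAt D (g 0) := by
      rw [hg0]; exact hDcontU.continuousAt (hUo.mem_nhds hU0)
    exact h1.comp hgc
  have hne : ∀ᶠ s in 𝓝 (0:ℝ), D (g s) ≠ 0 :=
    hDg_cont.eventually_ne (by rw [hg0, hD0]; exact hc)
  have hU' : ∀ᶠ s in 𝓝 (0:ℝ), g s ∈ U :=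
    hgc.eventually_mem (by rw [hg0]; exact hUo.mem_nhds hU0)
  have hbig : ∀ᶠ s in 𝓝 (0:ℝ),
      (f (g s) = s ∧ g (f s) = s ∧ s ∈ W ∧ g s ∈ U ∧ D (g s) ≠ 0) := by
    filter_upwards [hright, hleft, hWnhds, hU', hne] with s h1 h2 h3 h4 h5
    exact ⟨h1, h2, h3, h4, h5⟩
  obtain ⟨V, hVsub, hVo, hV0⟩ := mem_nhds_iff.mp hbig
  have hmap : ∀ s ∈ V, g s ∈ U := fun s hs => (hVsub hs).2.2.2.1
  have hDne : ∀ s ∈ V, D (g s) ≠ 0 := fun s hs => (hVsub hs).2.2.2.2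
  have hgV : ContDiffOn ℝ 3 g V := hgW.mono (fun s hs => (hVsub hs).2.2.1)
  refine ⟨hf00, g, V, hVo, hV0, fun s hs => (hVsub hs).1, fun r hr => (hVsub hr).2.1, hg0, ?_⟩
  intro b hb
  -- b = φ on V
  set φ : ℝ → ℝ := fun s => Real.exp (-Υ (g s)) with hφdef
  have hbφ : ∀ s ∈ V, b s = φ s := by
    intro s hs
    rw [hb, hφdef]
    by_cases h : s = 0
    · simp [h, hg0]
    · simp only [if_neg h]
      have h1 : f (g s) = s := (hVsub hs).1
      rw [hf] at h1
      simp only at h1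
      have hgs : g s ≠ 0 := by
        intro h0
        rw [h0] at h1
        simp at h1
        exact h h1.symm
      have h3 : rexp (-Υ (g s)) * (rexp (Υ (g s)) * g s) = rexp (-Υ (g s)) * s := by
        rw [h1]
      rw [← mul_assoc, ← Real.exp_add, neg_add_cancel, Real.exp_zero, one_mul] at h3
      rw [div_eq_iff h]
      exact h3
  -- smoothness of b
  have hφ3 : ContDiffOn ℝ 3 φ V :=
    Real.contDiff_exp.comp_contDiffOn ((hΥ.comp hgV (fun s hs => hmap s hs)).neg)
  have hb2 : ContDiffOn ℝ 2 b V := (hφ3.of_le (by norm_num)).congr hbφ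
  -- b = φ eventually
  have hbφev : b =ᶠ[𝓝 (0:ℝ)] φ := Filter.eventuallyEq_of_mem (hVo.mem_nhds hV0) hbφ
  -- derivative of g on V
  have hg' : ∀ s ∈ V, HasDerivAt g (D (g s))⁻¹ s := by
    intro s hs
    refine HasDerivAt.of_local_left_inverse
      (hgV.continuousOn.continuousAt (hVo.mem_nhds hs)) (hfd _ (hmap s hs)) (hDne s hs) ?_
    exact Filter.eventually_of_mem (hVo.mem_nhds hs) (fun y hy => (hVsub hy).1)
  -- first derivative of φ at 0
  have hΥ'0 : HasDerivAt Υ (deriv Υ 0) 0 := hΥd 0 hU0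
  have hΥg0 : HasDerivAt (fun s => Υ (g s)) (deriv Υ 0 * c⁻¹) 0 := by
    have h1 : HasDerivAt Υ (deriv Υ 0) (g 0) := by rw [hg0]; exact hΥ'0
    have := h1.comp 0 hg'0
    exact this
  have hφ0 : HasDerivAt φ (Real.exp (-Υ 0) * (-(deriv Υ 0 * c⁻¹))) 0 := by
    have := hΥg0.neg.exp
    simpa [hφdef, hg0] using this
  have hederiv : deriv b 0 = Real.exp (-Υ 0) * (-(deriv Υ 0 * c⁻¹)) := by
    rw [hbφev.deriv_eq]
    exact hφ0.deriv
  have hcinv : c⁻¹ = Real.exp (-Υ 0) := by rw [hcdef, ← Real.exp_neg]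
  have hce : c * Real.exp (-Υ 0) = 1 := by rw [hcdef, ← Real.exp_add]; simp
  have hd1 : deriv b 0 = -deriv Υ 0 * Real.exp (-2 * Υ 0) := by
    rw [hederiv, hcinv]
    have h2 : Real.exp (-2 * Υ 0) = Real.exp (-Υ 0) * Real.exp (-Υ 0) := by
      rw [← Real.exp_add]; ring_nf
    rw [h2]; ring
  -- second derivative
  set ψ : ℝ → ℝ := fun s => Real.exp (-Υ (g s)) * (-(deriv Υ (g s)) * (D (g s))⁻¹) with hψdef
  have hφ' : ∀ s ∈ V, HasDerivAt φ (ψ s) s := by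
    intro s hs
    have hgds := hg' s hs
    have h1 : HasDerivAt Υ (deriv Υ (g s)) (g s) := hΥd _ (hmap s hs)
    have h2 : HasDerivAt (fun t => Υ (g t)) (deriv Υ (g s) * (D (g s))⁻¹) s := by
      exact h1.comp s hgds
    have h3 := h2.neg.exp
    convert h3 using 1
    · rfl
    simp only [hψdef, Pi.neg_apply]
    ring
  have hφψ : ∀ s ∈ V, deriv φ s = ψ s := fun s hs => (hφ' s hs).deriv
  have hφψev : deriv φ =ᶠ[𝓝 (0:ℝ)] ψ := Filter.eventuallyEq_of_mem (hVo.mem_nhds hV0) hφψ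
  have hbb : deriv b =ᶠ[𝓝 (0:ℝ)] ψ := hbφev.deriv.trans hφψev
  -- has-deriv facts at 0 for the pieces of ψ
  have hdΥ0 : HasDerivAt (deriv Υ) (deriv (deriv Υ) 0) 0 :=
    ((hdΥ.contDiffAt (hUo.mem_nhds hU0)).differentiableAt (by norm_num)).hasDerivAt
  have hB : HasDerivAt (fun s => -(deriv Υ (g s))) (-(deriv (deriv Υ) 0 * c⁻¹)) 0 := by
    have h1 : HasDerivAt (deriv Υ) (deriv (deriv Υ) 0) (g 0) := by rw [hg0]; exact hdΥ0
    have := (h1.comp 0 hg'0).neg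
    exact this
  have hexp0 : HasDerivAt (fun r => Real.exp (Υ r)) (c * deriv Υ 0) 0 := by
    simpa [hcdef, mul_comm] using hΥ'0.exp
  have hDd : HasDerivAt D (2 * c * deriv Υ 0) 0 := by
    have h1 := ((hexp0.mul hdΥ0).mul (hasDerivAt_id 0)).add hexp0
    refine h1.congr_deriv ?_
    show (c * deriv Υ 0 * deriv Υ 0 + rexp (Υ 0) * deriv (deriv Υ) 0) * 0 + (rexp (Υ 0) * deriv Υ 0) * 1 + c * deriv Υ 0 = 2 * c * deriv Υ 0
    rw [hcdef]
    ring
  have hDg0 : HasDerivAt (fun s => D (g s)) (2 * c * deriv Υ 0 * c⁻¹) 0 := by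
    have h1 : HasDerivAt D (2 * c * deriv Υ 0) (g 0) := by rw [hg0]; exact hDd
    exact h1.comp 0 hg'0
  have hC : HasDerivAt (fun s => (D (g s))⁻¹)
      (-(2 * c * deriv Υ 0 * c⁻¹) / c ^ 2) 0 := by
    have h1 := hDg0.inv (by rw [hg0, hD0]; exact hc)
    rw [hg0, hD0] at h1
    exact h1
  have hψ0 := hφ0.mul (hB.mul hC)
  have hd2 : deriv (deriv b) 0
      = (3 * (deriv Υ 0) ^ 2 - deriv (deriv Υ) 0) * Real.exp (-3 * Υ 0) := by
    rw [hbb.deriv_eq]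
    have hval : deriv ψ 0 = _ := hψ0.deriv
    rw [hval]
    simp only [Pi.mul_apply, hg0, hD0, hφdef]
    have h3 : Real.exp (-3 * Υ 0) = Real.exp (-Υ 0) * (Real.exp (-Υ 0) * Real.exp (-Υ 0)) := by
      rw [← Real.exp_add, ← Real.exp_add]; ring_nf
    rw [h3, hcinv]
    field_simp
    linear_combination (-2 * deriv Υ 0 ^ 2) * hce
  exact ⟨hb2, hd1, hd2⟩
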